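/- arXiv:2109.01310 — 2 statements merged into one kernel-verified Lean document; each statement's English description precedes it below -/
import Mathlib

section
/- Let G be a graph, β ⊆ V(G) an induced subgraph, and suppose the components D_1,…,D_m of G\β satisfy: for each i there is a designated vertex r_i ∈ β with N(D_i) ⊆ C_i for some set C_i ⊆ N[r_i] ∩ β with r_i ∈ C_i, and all C_i \ {r_i} are complete to r_i (i.e., C_i ⊆ {r_i} ∪ N(r_i)). Given a tree decomposition (T_β, χ_β) of G[β] and tree decompositions (T_i, χ_i) of D_i, form T by joining each T_i to a node of T_β whose bag contains r_i, and set χ(u) = χ_β(u) ∪ ⋃_{r_i ∈ χ_β(u)} C_i for u ∈ T_β, and χ(u) = χ_i(u) ∪ C_i for u ∈ T_i. Then (T, χ) is a tree decomposition of G. -/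
universe u v

variable {V : Type u}

/-- The open neighborhood of a set `D`: vertices outside `D` with a neighbor in `D`. -/
def nbhd (G : SimpleGraph V) (D : Set V) : Set V :=
  {w | w ∉ D ∧ ∃ u ∈ D, G.Adj u w}

/-- `u` and `w` are joined by a walk all of whose vertices lie in `S`. -/
def ConnectedIn (G : SimpleGraph V) (S : Set V) (u w : V) : Prop :=
  ∃ p : G.Walk u w, ∀ x ∈ p.support, x ∈ S

/-- `D` is a connected component of the subgraph of `G` induced on `S`. -/
def IsCompOf (G : SimpleGraph V) (S : Set V) (D : Set V) : Prop :=
  D.Nonempty ∧ D ⊆ S ∧ (∀ u ∈ D, ∀ w ∈ D, ConnectedIn G D u w) ∧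
    ∀ u ∈ D, ∀ w ∈ S, G.Adj u w → w ∈ D

/-- `X` is a minimal separator: some `u, w` outside `X` are separated by `X`
but by no proper subset of `X`. -/
def IsMinimalSeparator (G : SimpleGraph V) (X : Set V) : Prop :=
  ∃ u w : V, u ∉ X ∧ w ∉ X ∧ ¬ ConnectedIn G Xᶜ u w ∧
    ∀ Y : Set V, Y ⊂ X → ConnectedIn G Yᶜ u w

/-- A tree decomposition of the subgraph of `G` induced on `W`. -/
structure IsTreeDecompOn {T : Type v} (G : SimpleGraph V) (W : Set V)
    (tree : SimpleGraph T) (χ : T → Set V) : Prop where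
  isTree : tree.IsTree
  bags_subset : ∀ t, χ t ⊆ W
  mem_bag : ∀ x ∈ W, ∃ t, x ∈ χ t
  edge_bag : ∀ x ∈ W, ∀ y ∈ W, G.Adj x y → ∃ t, x ∈ χ t ∧ y ∈ χ t
  trace_connected : ∀ x : V, ∀ t₁, x ∈ χ t₁ → ∀ t₂, x ∈ χ t₂ →
    ConnectedIn tree {t | x ∈ χ t} t₁ t₂

/-- A tree decomposition of `G`. -/
def IsTreeDecomp {T : Type v} (G : SimpleGraph V)
    (tree : SimpleGraph T) (χ : T → Set V) : Prop :=
  IsTreeDecompOn G Set.univ tree χ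

/-- The treewidth of `G`: the least `w` such that `G` has a tree decomposition
all of whose bags have at most `w + 1` vertices. -/
noncomputable def treewidth (G : SimpleGraph V) : ℕ :=
  sInf {w | ∃ (n : ℕ) (tree : SimpleGraph (Fin n)) (χ : Fin n → Set V),
    IsTreeDecomp G tree χ ∧ ∀ t, (χ t).ncard ≤ w + 1}

/-- `G` is chordal: it has no induced cycle of length at least 4. -/
def IsChordal (G : SimpleGraph V) : Prop :=
  ∀ n : ℕ, 4 ≤ n → ¬ ∃ f : Fin n → V, Function.Injective f ∧
    ∀ i j : Fin n, G.Adj (f i) (f j) ↔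
      ((i.val + 1) % n = j.val ∨ (j.val + 1) % n = i.val)

/-- `H` is a minimal chordal completion (fill-in) of `G`. -/
def IsMinimalChordalCompletion (G H : SimpleGraph V) : Prop :=
  G ≤ H ∧ IsChordal H ∧
    ∀ H' : SimpleGraph V, G ≤ H' → H' ≤ H → IsChordal H' → H' = H

/-- `Ω` is a potential maximal clique of `G`: a maximal clique of some minimal
chordal completion of `G`. -/
def IsPMC (G : SimpleGraph V) (Ω : Set V) : Prop :=
  ∃ H : SimpleGraph V, IsMinimalChordalCompletion G H ∧
    H.IsClique Ω ∧ ∀ Ω' : Set V, H.IsClique Ω' → Ω ⊆ Ω' → Ω' = Ω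

/-- The clique number `ω(G)`. -/
noncomputable def cliqueNumber (G : SimpleGraph V) : ℕ :=
  sSup {n | ∃ s : Finset V, G.IsNClique n s}

/-- A stable (independent) set of vertices. -/
def StableSet (G : SimpleGraph V) (S : Set V) : Prop :=
  ∀ u ∈ S, ∀ w ∈ S, ¬ G.Adj u w

/-- The Ramsey number `R(t, s)`: the least `n` such that every graph on `n`
vertices contains a clique of size `t` or a stable set of size `s`. -/
noncomputable def ramseyNum (t s : ℕ) : ℕ :=
  sInf {n | ∀ G : SimpleGraph (Fin n),
    (∃ K : Finset (Fin n), G.IsNClique t K) ∨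
    (∃ S : Finset (Fin n), S.card = s ∧ StableSet G ↑S)}

/-- `G` is `d`-degenerate: every induced subgraph has a vertex of degree less
than `d` (within that subgraph). -/
def DegenerateLE (G : SimpleGraph V) (d : ℕ) : Prop :=
  ∀ W : Set V, W.Nonempty → ∃ x ∈ W, (W ∩ G.neighborSet x).ncard < d

/-- `D` is the big component for `x`: a component of `G \ N[x]` with more than
half of all vertices. -/
def IsBigComp (G : SimpleGraph V) (x : V) (D : Set V) : Prop :=
  IsCompOf G ((insert x (G.neighborSet x))ᶜ) D ∧ Nat.card V < 2 * D.ncard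

/-- The `C`-side of the canonical star separation: `C(x) = {x} ∪ N(B(x))`. -/
def Cside (G : SimpleGraph V) (B : V → Set V) (x : V) : Set V :=
  insert x (nbhd G (B x))

/-- The `A`-side of the canonical star separation. -/
def Aside (G : SimpleGraph V) (B : V → Set V) (x : V) : Set V :=
  (B x ∪ Cside G B x)ᶜ

/-- Star twins. -/
def StarTwins (G : SimpleGraph V) (B : V → Set V) (x y : V) : Prop :=
  B x = B y ∧ Cside G B x \ {x} = Cside G B y \ {y} ∧
    Aside G B x ∪ {x} = Aside G B y ∪ {y}

/-- The relation `≤_A` (partial order by `A`-sides, ties among star twins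
broken by the total order `O`). -/
def leA (G : SimpleGraph V) (B : V → Set V) (O : V → ℕ) (x y : V) : Prop :=
  x = y ∨ (StarTwins G B x y ∧ O x < O y) ∨
    (¬ StarTwins G B x y ∧ y ∈ Aside G B x)

/-- `Core(S)`: the `≤_A`-minimal elements of `S`. -/
def CoreS (G : SimpleGraph V) (S : Set V) (B : V → Set V) (O : V → ℕ) : Set V :=
  {x ∈ S | ∀ u ∈ S, leA G B O u x → u = x}

/-- The central bag `β(S)`. -/
def centralBag (G : SimpleGraph V) (S : Set V) (B : V → Set V) (O : V → ℕ) :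
    Set V :=
  ⋂ x ∈ CoreS G S B O, (B x ∪ Cside G B x)

/-- `G` has a clique cutset. -/
def HasCliqueCutset (G : SimpleGraph V) : Prop :=
  ∃ K : Set V, G.IsClique K ∧ ∃ u w, u ∉ K ∧ w ∉ K ∧ ¬ ConnectedIn G Kᶜ u w

/-- A chordless (induced) path, as a walk. -/
def IsInducedPathW (G : SimpleGraph V) {a b : V} (P : G.Walk a b) : Prop :=
  P.IsPath ∧ ∀ i j : ℕ, i + 2 ≤ j → j ≤ P.length →
    ¬ G.Adj (P.getVert i) (P.getVert j)

/-- Two `a`–`b` walks have disjoint and anticomplete interiors. -/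
def IntDisjAnticomplete (G : SimpleGraph V) {a b : V} (P Q : G.Walk a b) : Prop :=
  ∀ u ∈ P.support, ∀ w ∈ Q.support, u ≠ a → u ≠ b → w ≠ a → w ≠ b →
    u ≠ w ∧ ¬ G.Adj u w

/-- `G` contains a theta (as an induced subgraph). -/
def HasTheta (G : SimpleGraph V) : Prop :=
  ∃ (a b : V) (P₁ P₂ P₃ : G.Walk a b),
    ¬ G.Adj a b ∧
    IsInducedPathW G P₁ ∧ 2 ≤ P₁.length ∧
    IsInducedPathW G P₂ ∧ 2 ≤ P₂.length ∧
    IsInducedPathW G P₃ ∧ 2 ≤ P₃.length ∧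
    IntDisjAnticomplete G P₁ P₂ ∧
    IntDisjAnticomplete G P₁ P₃ ∧
    IntDisjAnticomplete G P₂ P₃



namespace Aux16

lemma connectedIn_refl {G : SimpleGraph V} {S : Set V} {u : V} (hu : u ∈ S) :
    ConnectedIn G S u u :=
  ⟨SimpleGraph.Walk.nil, by simp [hu]⟩

lemma connectedIn_symm {G : SimpleGraph V} {S : Set V} {u w : V}
    (h : ConnectedIn G S u w) : ConnectedIn G S w u := by
  obtain ⟨p, hp⟩ := h
  exact ⟨p.reverse, by simpa using hp⟩

lemma connectedIn_trans {G : SimpleGraph V} {S : Set V} {u v w : V}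
    (h : ConnectedIn G S u v) (h' : ConnectedIn G S v w) : ConnectedIn G S u w := by
  obtain ⟨p, hp⟩ := h; obtain ⟨q, hq⟩ := h'
  refine ⟨p.append q, fun x hx => ?_⟩
  rcases (SimpleGraph.Walk.mem_support_append_iff _ _).1 hx with h | h
  · exact hp x h
  · exact hq x h

lemma connectedIn_of_adj {G : SimpleGraph V} {S : Set V} {u w : V}
    (h : G.Adj u w) (hu : u ∈ S) (hw : w ∈ S) : ConnectedIn G S u w :=
  ⟨SimpleGraph.Walk.cons h SimpleGraph.Walk.nil, by
    intro x hx
    simp only [SimpleGraph.Walk.support_cons, SimpleGraph.Walk.support_nil,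
      List.mem_cons, List.not_mem_nil, or_false] at hx
    rcases hx with rfl | rfl
    · exact hu
    · exact hw⟩

lemma connectedIn_map {W : Type*} {X : Type*} {G : SimpleGraph W} {H : SimpleGraph X}
    (f : G →g H) {S : Set W} {S' : Set X} (hS : ∀ a ∈ S, f a ∈ S') {a b : W}
    (h : ConnectedIn G S a b) : ConnectedIn H S' (f a) (f b) := by
  obtain ⟨p, hp⟩ := h
  refine ⟨p.map f, fun x hx => ?_⟩
  rw [SimpleGraph.Walk.support_map, List.mem_map] at hx
  obtain ⟨y, hy, rfl⟩ := hx
  exact hS y (hp y hy)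

lemma walk_closed {W : Type*} {H : SimpleGraph W} {S : Set W}
    (hS : ∀ a ∈ S, ∀ b, H.Adj a b → b ∈ S) {a b : W} (p : H.Walk a b) (ha : a ∈ S) :
    b ∈ S := by
  induction p with
  | nil => exact ha
  | cons h p ih => exact ih (hS _ ha _ h)

lemma proj_reach {W : Type*} {X : Type*} {H : SimpleGraph W} {K : SimpleGraph X} (f : W → X)
    (hf : ∀ a b, H.Adj a b → f a = f b ∨ K.Adj (f a) (f b)) {a b : W} (p : H.Walk a b) :
    K.Reachable (f a) (f b) := by
  induction p with
  | nil => exact SimpleGraph.Reachable.refl _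
  | cons h p ih =>
    rcases hf _ _ h with he | hadj
    · exact he ▸ ih
    · exact hadj.reachable.trans ih

end Aux16

/-- Extending a tree decomposition of the central bag to one of `G` by hanging
decompositions of the components `D_i` at nodes containing their anchors and
adding `C_i` to the appropriate bags. -/
theorem stmt16 {m : ℕ} {Tb : Type v} {Ti : Fin m → Type v}
    (G : SimpleGraph V) (β : Set V) (D : Fin m → Set V)
    (hcomp : ∀ i, IsCompOf G βᶜ (D i))
    (hcover : ∀ x, x ∉ β → ∃ i, x ∈ D i)
    (hdisj : ∀ i j, i ≠ j → Disjoint (D i) (D j))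
    (r : Fin m → V) (C : Fin m → Set V)
    (hrβ : ∀ i, r i ∈ β)
    (hrC : ∀ i, r i ∈ C i)
    (hCsub : ∀ i, C i ⊆ insert (r i) (G.neighborSet (r i)) ∩ β)
    (hND : ∀ i, nbhd G (D i) ⊆ C i)
    (treeb : SimpleGraph Tb) (χb : Tb → Set V)
    (hdecb : IsTreeDecompOn G β treeb χb)
    (treei : ∀ i, SimpleGraph (Ti i)) (χi : ∀ i, Ti i → Set V)
    (hdeci : ∀ i, IsTreeDecompOn G (D i) (treei i) (χi i))
    (att : Fin m → Tb) (hatt : ∀ i, r i ∈ χb (att i))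
    (root : ∀ i, Ti i)
    (tree : SimpleGraph (Tb ⊕ Σ i, Ti i))
    (h1 : ∀ s t : Tb, tree.Adj (Sum.inl s) (Sum.inl t) ↔ treeb.Adj s t)
    (h2 : ∀ (i : Fin m) (s t : Ti i),
      tree.Adj (Sum.inr ⟨i, s⟩) (Sum.inr ⟨i, t⟩) ↔ (treei i).Adj s t)
    (h3 : ∀ (i j : Fin m), i ≠ j → ∀ (s : Ti i) (t : Ti j),
      ¬ tree.Adj (Sum.inr ⟨i, s⟩) (Sum.inr ⟨j, t⟩))
    (h4 : ∀ (i : Fin m) (s : Ti i) (t : Tb),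
      tree.Adj (Sum.inl t) (Sum.inr ⟨i, s⟩) ↔ (t = att i ∧ s = root i)) :
    IsTreeDecomp G tree
      (Sum.elim (fun t => χb t ∪ ⋃ i, ⋃ (_ : r i ∈ χb t), C i)
        (fun p => χi p.1 p.2 ∪ C p.1)) := by
  classical
  set χ : (Tb ⊕ Σ i, Ti i) → Set V :=
    Sum.elim (fun t => χb t ∪ ⋃ i, ⋃ (_ : r i ∈ χb t), C i)
      (fun p => χi p.1 p.2 ∪ C p.1) with hχ
  have hCβ : ∀ i, C i ⊆ β := fun i x hx => ((hCsub i) hx).2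
  have hDβ : ∀ i, D i ⊆ βᶜ := fun i => (hcomp i).2.1
  have hχbβ : ∀ t, χb t ⊆ β := hdecb.bags_subset
  have hχiD : ∀ i s, χi i s ⊆ D i := fun i => (hdeci i).bags_subset
  let fB : treeb →g tree := ⟨Sum.inl, fun {a b} h => (h1 a b).2 h⟩
  let fI : ∀ i, treei i →g tree := fun i =>
    ⟨fun s => Sum.inr ⟨i, s⟩, fun {a b} h => (h2 i a b).2 h⟩
  have hattAdj : ∀ i, tree.Adj (Sum.inl (att i)) (Sum.inr ⟨i, root i⟩) :=
    fun i => (h4 i (root i) (att i)).2 ⟨rfl, rfl⟩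
  refine ⟨?_, fun t => Set.subset_univ _, ?_, ?_, ?_⟩
  · -- the tree is a tree
    constructor
    · -- connected
      have hne : Nonempty Tb := hdecb.isTree.isConnected.nonempty
      haveI : Nonempty (Tb ⊕ Σ i, Ti i) := ⟨Sum.inl hne.some⟩
      have key : ∀ v : Tb ⊕ Σ i, Ti i, ∃ t : Tb, tree.Reachable v (Sum.inl t) := by
        rintro (t | ⟨i, s⟩)
        · exact ⟨t, SimpleGraph.Reachable.refl _⟩
        · refine ⟨att i, ?_⟩
          have hr : (treei i).Reachable s (root i) := (hdeci i).isTree.isConnected s (root i)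
          exact (hr.map (fI i)).trans (hattAdj i).symm.reachable
      refine ⟨fun v w => ?_⟩
      obtain ⟨t, hv⟩ := key v
      obtain ⟨t', hw⟩ := key w
      exact hv.trans (((hdecb.isTree.isConnected t t').map fB).trans hw.symm)
    · -- acyclic
      rw [SimpleGraph.isAcyclic_iff_forall_adj_isBridge]
      have pendant : ∀ i : Fin m,
          ¬ (tree \ SimpleGraph.fromEdgeSet
              {s(Sum.inl (att i), Sum.inr ⟨i, root i⟩)}).Reachable
            (Sum.inl (att i)) (Sum.inr ⟨i, root i⟩) := by
        intro i h
        obtain ⟨p⟩ := h.symm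
        have hcl : ∀ a ∈ {x : Tb ⊕ Σ j, Ti j | ∃ u : Ti i, x = Sum.inr ⟨i, u⟩}, ∀ b,
            (tree \ SimpleGraph.fromEdgeSet
              {s(Sum.inl (att i), Sum.inr ⟨i, root i⟩)}).Adj a b →
            b ∈ {x : Tb ⊕ Σ j, Ti j | ∃ u : Ti i, x = Sum.inr ⟨i, u⟩} := by
          rintro a ⟨u, rfl⟩ b hab
          rw [SimpleGraph.sdiff_adj] at hab
          obtain ⟨hadj, hne⟩ := hab
          rcases b with t' | ⟨j, v⟩
          · exfalso
            obtain ⟨ht', hu⟩ := (h4 i u t').1 hadj.symm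
            subst ht'; subst hu
            refine hne ?_
            rw [SimpleGraph.fromEdgeSet_adj]
            exact ⟨Set.mem_singleton_iff.2 (Sym2.eq_swap), hadj.ne⟩
          · by_cases hij : j = i
            · subst hij; exact ⟨v, rfl⟩
            · exact absurd hadj (h3 i j (Ne.symm hij) u v)
        obtain ⟨u, hu⟩ := Aux16.walk_closed hcl p ⟨root i, rfl⟩
        exact Sum.inl_ne_inr hu
      rintro (s0 | ⟨i, s0⟩) (t0 | ⟨j, t0⟩) hvw <;> rw [SimpleGraph.isBridge_iff]
      · -- inl, inl
        intro hreach
        have hb := (SimpleGraph.isAcyclic_iff_forall_adj_isBridge.1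
          hdecb.isTree.IsAcyclic) ((h1 _ _).1 hvw)
        rw [SimpleGraph.isBridge_iff] at hb
        refine hb ?_
        obtain ⟨p⟩ := hreach
        have hproj := Aux16.proj_reach
          (K := treeb \ SimpleGraph.fromEdgeSet {s(s0, t0)})
          (Sum.elim id (fun q : Σ j, Ti j => att q.1)) ?_ p
        · exact hproj
        · rintro (a | ⟨ja, u⟩) (b | ⟨jb, v⟩) hab <;> rw [SimpleGraph.deleteEdges, SimpleGraph.sdiff_adj] at hab
          · right
            refine ⟨(h1 _ _).1 hab.1, ?_⟩
            rw [SimpleGraph.fromEdgeSet_adj]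
            rintro ⟨he, -⟩
            refine hab.2 ?_
            rw [SimpleGraph.fromEdgeSet_adj]
            refine ⟨?_, hab.1.ne⟩
            rw [Set.mem_singleton_iff] at he ⊢
            rcases Sym2.eq_iff.1 he with ⟨rfl, rfl⟩ | ⟨rfl, rfl⟩
            · rfl
            · exact Sym2.eq_swap
          · left
            obtain ⟨ht, -⟩ := (h4 jb v a).1 hab.1
            simp [ht]
          · left
            obtain ⟨ht, -⟩ := (h4 ja u b).1 hab.1.symm
            simp [ht]
          · left
            by_cases hjj : ja = jb
            · subst hjj; rfl
            · exact absurd hab.1 (h3 ja jb hjj u v)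
      · -- inl, inr
        obtain ⟨ht, hs⟩ := (h4 j t0 s0).1 hvw
        subst ht; subst hs
        exact pendant j
      · -- inr, inl
        obtain ⟨ht, hs⟩ := (h4 i s0 t0).1 hvw.symm
        subst ht; subst hs
        intro h
        rw [Sym2.eq_swap] at h
        exact pendant i h.symm
      · -- inr, inr
        by_cases hij : i = j
        swap
        · exact absurd hvw (h3 i j hij s0 t0)
        subst hij
        intro hreach
        have hb := (SimpleGraph.isAcyclic_iff_forall_adj_isBridge.1
          (hdeci i).isTree.IsAcyclic) ((h2 i _ _).1 hvw)
        rw [SimpleGraph.isBridge_iff] at hb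
        refine hb ?_
        obtain ⟨p⟩ := hreach
        have hproj := Aux16.proj_reach
          (K := treei i \ SimpleGraph.fromEdgeSet {s(s0, t0)})
          (Sum.elim (fun _ => root i)
            (fun q : Σ j, Ti j => if h : q.1 = i then h ▸ q.2 else root i)) ?_ p
        · simp at hproj; exact hproj
        · rintro (a | ⟨ja, u⟩) (b | ⟨jb, v⟩) hab <;> rw [SimpleGraph.deleteEdges, SimpleGraph.sdiff_adj] at hab
          · left; rfl
          · left
            by_cases hb' : jb = i
            · subst hb'
              obtain ⟨-, hv⟩ := (h4 jb v a).1 hab.1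
              subst hv; simp
            · simp [hb']
          · left
            by_cases ha' : ja = i
            · subst ha'
              obtain ⟨-, hu⟩ := (h4 ja u b).1 hab.1.symm
              subst hu; simp
            · simp [ha']
          · have hjj : ja = jb := by
              by_contra hjj
              exact absurd hab.1 (h3 ja jb hjj u v)
            subst hjj
            by_cases ha' : ja = i
            · subst ha'
              right
              simp only [Sum.elim_inr, dif_pos]
              refine ⟨(h2 ja _ _).1 hab.1, ?_⟩
              rw [SimpleGraph.fromEdgeSet_adj]
              rintro ⟨he, -⟩
              refine hab.2 ?_
              rw [SimpleGraph.fromEdgeSet_adj]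
              refine ⟨?_, hab.1.ne⟩
              rw [Set.mem_singleton_iff] at he ⊢
              rcases Sym2.eq_iff.1 he with ⟨rfl, rfl⟩ | ⟨rfl, rfl⟩
              · rfl
              · exact Sym2.eq_swap
            · left; simp [ha']
  · -- mem_bag
    intro x _
    by_cases hx : x ∈ β
    · obtain ⟨t, ht⟩ := hdecb.mem_bag x hx
      exact ⟨Sum.inl t, Set.mem_union_left _ ht⟩
    · obtain ⟨i, hi⟩ := hcover x hx
      obtain ⟨s, hs⟩ := (hdeci i).mem_bag x hi
      exact ⟨Sum.inr ⟨i, s⟩, Set.mem_union_left _ hs⟩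
  · -- edge_bag
    intro x _ y _ hxy
    by_cases hx : x ∈ β <;> by_cases hy : y ∈ β
    · obtain ⟨t, ht⟩ := hdecb.edge_bag x hx y hy hxy
      exact ⟨Sum.inl t, Set.mem_union_left _ ht.1, Set.mem_union_left _ ht.2⟩
    · obtain ⟨i, hi⟩ := hcover y hy
      have hxC : x ∈ C i := hND i ⟨fun hxD => (hDβ i hxD) hx, y, hi, hxy.symm⟩
      obtain ⟨s, hs⟩ := (hdeci i).mem_bag y hi
      exact ⟨Sum.inr ⟨i, s⟩, Set.mem_union_right _ hxC, Set.mem_union_left _ hs⟩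
    · obtain ⟨i, hi⟩ := hcover x hx
      have hyC : y ∈ C i := hND i ⟨fun hyD => (hDβ i hyD) hy, x, hi, hxy⟩
      obtain ⟨s, hs⟩ := (hdeci i).mem_bag x hi
      exact ⟨Sum.inr ⟨i, s⟩, Set.mem_union_left _ hs, Set.mem_union_right _ hyC⟩
    · obtain ⟨i, hi⟩ := hcover x hx
      have hyD : y ∈ D i := (hcomp i).2.2.2 x hi y hy hxy
      obtain ⟨s, hs⟩ := (hdeci i).edge_bag x hi y hyD hxy
      exact ⟨Sum.inr ⟨i, s⟩, Set.mem_union_left _ hs.1, Set.mem_union_left _ hs.2⟩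
  · -- trace_connected
    intro x t₁ ht₁ t₂ ht₂
    by_cases hx : x ∈ β
    · obtain ⟨tx, htx⟩ := hdecb.mem_bag x hx
      have memInlL : ∀ t : Tb, x ∈ χb t →
          (Sum.inl t : Tb ⊕ Σ i, Ti i) ∈ {n | x ∈ χ n} :=
        fun t ht => Set.mem_union_left _ ht
      have memR : ∀ (t : Tb) (i : Fin m), r i ∈ χb t → x ∈ C i →
          (Sum.inl t : Tb ⊕ Σ i, Ti i) ∈ {n | x ∈ χ n} :=
        fun t i hri hxC =>
          Set.mem_union_right _ (Set.mem_iUnion.2 ⟨i, Set.mem_iUnion.2 ⟨hri, hxC⟩⟩)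
      have memInrS : ∀ (i : Fin m) (a : Ti i), x ∈ C i →
          (Sum.inr ⟨i, a⟩ : Tb ⊕ Σ i, Ti i) ∈ {n | x ∈ χ n} :=
        fun i a hxC => Set.mem_union_right _ hxC
      have claimA : ∀ t : Tb, x ∈ χb t →
          ConnectedIn tree {n | x ∈ χ n} (Sum.inl t) (Sum.inl tx) := by
        intro t ht
        exact Aux16.connectedIn_map fB (fun a ha => memInlL a ha)
          (hdecb.trace_connected x t ht tx htx)
      have claimB : ∀ (t : Tb) (i : Fin m), r i ∈ χb t → x ∈ C i →
          ConnectedIn tree {n | x ∈ χ n} (Sum.inl t) (Sum.inl tx) := by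
        intro t i hri hxC
        rcases Set.mem_insert_iff.1 ((hCsub i hxC).1) with hxr | hadj
        · exact claimA t (hxr ▸ hri)
        · obtain ⟨t₀, ht₀r, ht₀x⟩ := hdecb.edge_bag (r i) (hrβ i) x hx hadj
          have step1 : ConnectedIn tree {n | x ∈ χ n} (Sum.inl t) (Sum.inl t₀) :=
            Aux16.connectedIn_map fB (fun a ha => memR a i ha hxC)
              (hdecb.trace_connected (r i) t hri t₀ ht₀r)
          exact Aux16.connectedIn_trans step1 (claimA t₀ ht₀x)
      have key : ∀ n, x ∈ χ n → ConnectedIn tree {n | x ∈ χ n} n (Sum.inl tx) := by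
        rintro (t | ⟨i, s⟩) hn
        · have hn' : x ∈ χb t ∨ ∃ i, r i ∈ χb t ∧ x ∈ C i := by
            simpa [hχ] using hn
          rcases hn' with h | ⟨i, hri, hxC⟩
          · exact claimA t h
          · exact claimB t i hri hxC
        · have hxC : x ∈ C i := by
            have hn' : x ∈ χi i s ∨ x ∈ C i := by simpa [hχ] using hn
            rcases hn' with h | h
            · exact absurd hx (fun hx' => (hDβ i (hχiD i s h)) hx')
            · exact h
          have step1 : ConnectedIn tree {n | x ∈ χ n}
              (Sum.inr ⟨i, s⟩) (Sum.inr ⟨i, root i⟩) := by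
            have hr : ConnectedIn (treei i) Set.univ s (root i) := by
              obtain ⟨p⟩ := (hdeci i).isTree.isConnected s (root i)
              exact ⟨p, fun _ _ => trivial⟩
            exact Aux16.connectedIn_map (fI i) (fun a _ => memInrS i a hxC) hr
          have step2 : ConnectedIn tree {n | x ∈ χ n}
              (Sum.inr ⟨i, root i⟩) (Sum.inl (att i)) :=
            Aux16.connectedIn_of_adj (hattAdj i).symm (memInrS i (root i) hxC)
              (memR (att i) i (hatt i) hxC)
          exact Aux16.connectedIn_trans step1
            (Aux16.connectedIn_trans step2 (claimB (att i) i (hatt i) hxC))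
      exact Aux16.connectedIn_trans (key t₁ ht₁) (Aux16.connectedIn_symm (key t₂ ht₂))
    · obtain ⟨i, hiD⟩ := hcover x hx
      have hnode : ∀ n, x ∈ χ n → ∃ s : Ti i, n = Sum.inr ⟨i, s⟩ ∧ x ∈ χi i s := by
        rintro (t | ⟨j, s⟩) hn
        · exfalso
          have hn' : x ∈ χb t ∨ ∃ i', r i' ∈ χb t ∧ x ∈ C i' := by simpa [hχ] using hn
          rcases hn' with h | ⟨i', -, h⟩
          · exact hx (hχbβ t h)
          · exact hx (hCβ i' h)
        · have hn' : x ∈ χi j s ∨ x ∈ C j := by simpa [hχ] using hn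
          rcases hn' with h | h
          · have hji : j = i := by
              by_contra hne
              exact Set.disjoint_left.1 (hdisj j i hne) (hχiD j s h) hiD
            subst hji
            exact ⟨s, rfl, h⟩
          · exact absurd (hCβ j h) hx
      obtain ⟨s₁, rfl, hs₁⟩ := hnode t₁ ht₁
      obtain ⟨s₂, rfl, hs₂⟩ := hnode t₂ ht₂
      refine Aux16.connectedIn_map (fI i) ?_ ((hdeci i).trace_connected x s₁ hs₁ s₂ hs₂)
      intro a ha
      exact Set.mem_union_left _ ha
end

section
/- Let G be a graph, v ∈ V(G), and let D_1,…,D_m be the components of G\N[v]. Let Z ⊆ N(v) and let H be the graph with vertex set (N(v)\Z) ∪ {d_1,…,d_m} where {d_1,…,d_m} is a stable set, N_H(d_i) = N(D_i)\Z, and edges among N(v)\Z as in G. Given a tree decomposition (T_0,χ_0) of H and tree decompositions (T_i,χ_i) of D_i, form T by joining each T_i by an edge to a node v(i) of T_0 with d_i ∈ χ_0(v(i)), and define χ(u) = (χ_0(u)\{d_1,…,d_m}) ∪ Z ∪ {v} ∪ ⋃_{d_i ∈ χ_0(u)} N_H(d_i) for u ∈ T_0, and χ(u) = χ_i(u) ∪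 N_H(d_i) ∪ Z ∪ {v} for u ∈ T_i (where adding {v} to the latter bags is harmless). Then (T,χ) is a tree decomposition of G, provided N(D_i) ⊆ N(v) for all i. -/
universe u v

variable {V : Type u}

section StmtAux
open SimpleGraph

variable {A : Type*} {B : Type*} {G : SimpleGraph V} {S S' : Set V} {u w z : V}

lemma ConnectedIn.refl (hu : u ∈ S) : ConnectedIn G S u u :=
  ⟨SimpleGraph.Walk.nil, by simp [hu]⟩

lemma ConnectedIn.symm (h : ConnectedIn G S u w) : ConnectedIn G S w u := by
  obtain ⟨p, hp⟩ := h
  exact ⟨p.reverse, by simpa using hp⟩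

lemma ConnectedIn.trans (h : ConnectedIn G S u w) (h' : ConnectedIn G S w z) :
    ConnectedIn G S u z := by
  obtain ⟨p, hp⟩ := h; obtain ⟨q, hq⟩ := h'
  refine ⟨p.append q, fun x hx => ?_⟩
  rcases (SimpleGraph.Walk.mem_support_append_iff _ _).1 hx with h | h
  exacts [hp x h, hq x h]

lemma ConnectedIn.mono (hS : S ⊆ S') (h : ConnectedIn G S u w) : ConnectedIn G S' u w := by
  obtain ⟨p, hp⟩ := h; exact ⟨p, fun x hx => hS (hp x hx)⟩

lemma connectedIn_of_adj (h : G.Adj u w) (hu : u ∈ S) (hw : w ∈ S) : ConnectedIn G S u w :=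
  ⟨SimpleGraph.Walk.cons h SimpleGraph.Walk.nil, by simp [hu, hw]⟩

lemma connectedIn_univ_of_reachable {G : SimpleGraph A} {a b : A} (h : G.Reachable a b) :
    ConnectedIn G Set.univ a b := by
  obtain ⟨p⟩ := h; exact ⟨p, fun x _ => trivial⟩

lemma ConnectedIn.map {GA : SimpleGraph A} {GB : SimpleGraph B} (f : GA →g GB)
    {S : Set A} {S' : Set B} (hS : ∀ a ∈ S, f a ∈ S') {a b : A}
    (h : ConnectedIn GA S a b) : ConnectedIn GB S' (f a) (f b) := by
  obtain ⟨p, hp⟩ := h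
  refine ⟨p.map f, fun x hx => ?_⟩
  rw [SimpleGraph.Walk.support_map, List.mem_map] at hx
  obtain ⟨y, hy, rfl⟩ := hx
  exact hS y (hp y hy)

/-- Descend a walk along an injective graph map whose support lies in the range. -/
lemma exists_preimage_walk {GA : SimpleGraph A} {GB : SimpleGraph B} (f : GA →g GB)
    (hinj : Function.Injective f)
    (hrev : ∀ a a', GB.Adj (f a) (f a') → GA.Adj a a')
    {p q : B} (w : GB.Walk p q) :
    ∀ (_ : ∀ x ∈ w.support, ∃ a, f a = x) {a b : A} (ha : f a = p) (hb : f b = q),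
      ∃ ww : GA.Walk a b, ww.map f = w.copy ha.symm hb.symm := by
  induction w with
  | nil =>
    intro _ a b ha hb
    obtain rfl : a = b := hinj (ha.trans hb.symm)
    subst ha
    exact ⟨SimpleGraph.Walk.nil, by simp⟩
  | @cons p c q h w ih =>
    intro hsup a b ha hb
    obtain ⟨a', ha'⟩ := hsup c (by simp)
    have hadj : GA.Adj a a' := hrev a a' (by rw [ha, ha']; exact h)
    obtain ⟨ww, hww⟩ := ih (fun x hx => hsup x (by simp [hx])) ha' hb
    refine ⟨SimpleGraph.Walk.cons hadj ww, ?_⟩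
    subst ha; subst hb; subst ha'
    simp only [SimpleGraph.Walk.copy_rfl_rfl] at hww ⊢
    rw [SimpleGraph.Walk.map_cons, hww]

lemma no_cycle_in_range {GA : SimpleGraph A} {GB : SimpleGraph B} (f : GA →g GB)
    (hinj : Function.Injective f)
    (hrev : ∀ a a', GB.Adj (f a) (f a') → GA.Adj a a')
    (hGA : GA.IsAcyclic) {b : B} (c : GB.Walk b b) (hc : c.IsCycle)
    (hsup : ∀ x ∈ c.support, ∃ a, f a = x) : False := by
  obtain ⟨a, ha⟩ := hsup b c.start_mem_support
  obtain ⟨ww, hww⟩ := exists_preimage_walk f hinj hrev c hsup ha ha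
  have : ww.IsCycle := by
    rw [← SimpleGraph.Walk.map_isCycle_iff_of_injective hinj (p := ww), hww]
    exact ((SimpleGraph.Walk.isCycle_copy c ha.symm)).2 hc
  exact hGA ww this

lemma cycle_unique_boundary {G : SimpleGraph A} {w : A} (c : G.Walk w w) (hc : c.IsCycle)
    (S : Set A) {a b : A}
    (huniq : ∀ p q : A, G.Adj p q → p ∈ S → q ∉ S → p = a ∧ q = b)
    {u v : A} (hu : u ∈ c.support) (hus : u ∈ S) (hv : v ∈ c.support) (hvs : v ∉ S) :
    False := by
  classical
  -- find an exiting dart and an entering dart in c.darts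
  have hdarts : (∃ d ∈ c.darts, d.fst ∈ S ∧ d.snd ∉ S) ∧
      (∃ d ∈ c.darts, d.fst ∉ S ∧ d.snd ∈ S) := by
    by_cases hw : w ∈ S
    · obtain ⟨d1, hd1, hd1p⟩ := (c.takeUntil v hv).exists_boundary_dart S hw hvs
      obtain ⟨d2, hd2, hd2p⟩ := (c.dropUntil v hv).exists_boundary_dart Sᶜ hvs (by simp [hw])
      exact ⟨⟨d1, c.darts_takeUntil_subset hv hd1, hd1p⟩,
        ⟨d2, c.darts_dropUntil_subset hv hd2, hd2p.1, not_not.1 hd2p.2⟩⟩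
    · obtain ⟨d2, hd2, hd2p⟩ := (c.takeUntil u hu).exists_boundary_dart Sᶜ hw (by simp [hus])
      obtain ⟨d1, hd1, hd1p⟩ := (c.dropUntil u hu).exists_boundary_dart S hus hw
      exact ⟨⟨d1, c.darts_dropUntil_subset hu hd1, hd1p⟩,
        ⟨d2, c.darts_takeUntil_subset hu hd2, hd2p.1, not_not.1 hd2p.2⟩⟩
  obtain ⟨⟨d1, hd1, hd1S, hd1S'⟩, ⟨d2, hd2, hd2S, hd2S'⟩⟩ := hdarts
  obtain ⟨rfl, rfl⟩ := huniq d1.fst d1.snd d1.adj hd1S hd1S'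
  obtain ⟨h2a, h2b⟩ := huniq d2.snd d2.fst d2.adj.symm hd2S' hd2S
  have hne : d1 ≠ d2 := by
    intro h; rw [h] at hd1S; exact hd2S hd1S
  have h12 : d1.toProd = d2.toProd.swap := Prod.ext h2a.symm h2b.symm
  have hedges : d1.edge = d2.edge := by
    rw [SimpleGraph.Dart.edge, SimpleGraph.Dart.edge, h12, Sym2.mk_prod_swap_eq]
    exact rfl
  have hnodup : c.edges.Nodup := hc.isCircuit.isTrail.edges_nodup
  rw [SimpleGraph.Walk.edges] at hnodup
  exact hne (List.inj_on_of_nodup_map hnodup hd1 hd2 hedges)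

end StmtAux

/-- Extending a tree decomposition of the contracted neighborhood graph `H` of
a vertex `x` to a tree decomposition of `G`. -/
theorem stmt17 {m : ℕ} {T0 : Type v} {Ti : Fin m → Type v}
    (G : SimpleGraph V) (x : V) (Z : Set V) (hZ : Z ⊆ G.neighborSet x)
    (D : Fin m → Set V)
    (hcomp : ∀ i, IsCompOf G ((insert x (G.neighborSet x))ᶜ) (D i))
    (hcover : ∀ w, w ∉ insert x (G.neighborSet x) → ∃ i, w ∈ D i)
    (hdisj : ∀ i j, i ≠ j → Disjoint (D i) (D j))
    (hND : ∀ i, nbhd G (D i) ⊆ G.neighborSet x)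
    (H : SimpleGraph (V ⊕ Fin m))
    (hH1 : ∀ a b : V, H.Adj (Sum.inl a) (Sum.inl b) ↔
      (a ∈ G.neighborSet x \ Z ∧ b ∈ G.neighborSet x \ Z ∧ G.Adj a b))
    (hH2 : ∀ (a : V) (i : Fin m),
      H.Adj (Sum.inl a) (Sum.inr i) ↔ a ∈ nbhd G (D i) \ Z)
    (hH3 : ∀ i j : Fin m, ¬ H.Adj (Sum.inr i) (Sum.inr j))
    (tree0 : SimpleGraph T0) (χ0 : T0 → Set (V ⊕ Fin m))
    (hdec0 : IsTreeDecompOn H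
      (Sum.inl '' (G.neighborSet x \ Z) ∪ Set.range Sum.inr) tree0 χ0)
    (treei : ∀ i, SimpleGraph (Ti i)) (χi : ∀ i, Ti i → Set V)
    (hdeci : ∀ i, IsTreeDecompOn G (D i) (treei i) (χi i))
    (att : Fin m → T0) (hatt : ∀ i, Sum.inr i ∈ χ0 (att i))
    (root : ∀ i, Ti i)
    (tree : SimpleGraph (T0 ⊕ Σ i, Ti i))
    (h1 : ∀ s t : T0, tree.Adj (Sum.inl s) (Sum.inl t) ↔ tree0.Adj s t)
    (h2 : ∀ (i : Fin m) (s t : Ti i),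
      tree.Adj (Sum.inr ⟨i, s⟩) (Sum.inr ⟨i, t⟩) ↔ (treei i).Adj s t)
    (h3 : ∀ (i j : Fin m), i ≠ j → ∀ (s : Ti i) (t : Ti j),
      ¬ tree.Adj (Sum.inr ⟨i, s⟩) (Sum.inr ⟨j, t⟩))
    (h4 : ∀ (i : Fin m) (s : Ti i) (t : T0),
      tree.Adj (Sum.inl t) (Sum.inr ⟨i, s⟩) ↔ (t = att i ∧ s = root i)) :
    IsTreeDecomp G tree
      (Sum.elim
        (fun t => {a : V | Sum.inl a ∈ χ0 t} ∪ Z ∪ {x} ∪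
          ⋃ i, ⋃ (_ : Sum.inr i ∈ χ0 t), (nbhd G (D i) \ Z))
        (fun p => χi p.1 p.2 ∪ (nbhd G (D p.1) \ Z) ∪ Z ∪ {x})) := by
  classical
  set F : T0 ⊕ (Σ i, Ti i) → Set V := Sum.elim
      (fun t => {a : V | Sum.inl a ∈ χ0 t} ∪ Z ∪ {x} ∪
        ⋃ i, ⋃ (_ : Sum.inr i ∈ χ0 t), (nbhd G (D i) \ Z))
      (fun p => χi p.1 p.2 ∪ (nbhd G (D p.1) \ Z) ∪ Z ∪ {x}) with hF
  -- membership characterizations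
  have hFl : ∀ (t : T0) (a : V), a ∈ F (Sum.inl t) ↔
      (Sum.inl a ∈ χ0 t ∨ a ∈ Z ∨ a = x ∨
        ∃ i, Sum.inr i ∈ χ0 t ∧ a ∈ nbhd G (D i) ∧ a ∉ Z) := by
    intro t a
    simp only [hF, Sum.elim_inl, Set.mem_union, Set.mem_setOf_eq, Set.mem_singleton_iff,
      Set.mem_iUnion, Set.mem_diff]
    tauto
  have hFr : ∀ (i : Fin m) (s : Ti i) (a : V), a ∈ F (Sum.inr ⟨i, s⟩) ↔
      (a ∈ χi i s ∨ (a ∈ nbhd G (D i) ∧ a ∉ Z) ∨ a ∈ Z ∨ a = x) := by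
    intro i s a
    simp only [hF, Sum.elim_inr, Set.mem_union, Set.mem_singleton_iff, Set.mem_diff]
    tauto
  have hxZ_all : ∀ (t : T0 ⊕ (Σ i, Ti i)) (a : V), (a = x ∨ a ∈ Z) → a ∈ F t := by
    rintro (t | ⟨i, s⟩) a (rfl | haZ)
    · exact (hFl _ _).2 (Or.inr (Or.inr (Or.inl rfl)))
    · exact (hFl _ _).2 (Or.inr (Or.inl haZ))
    · exact (hFr _ _ _).2 (Or.inr (Or.inr (Or.inr rfl)))
    · exact (hFr _ _ _).2 (Or.inr (Or.inr (Or.inl haZ)))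
  -- basic facts about components
  have hDnx : ∀ (i : Fin m), ∀ a ∈ D i, a ∉ insert x (G.neighborSet x) := by
    intro i a ha
    exact (hcomp i).2.1 ha
  have hDne : ∀ (i : Fin m), ∀ a ∈ D i, a ≠ x := by
    intro i a ha h; exact hDnx i a ha (by simp [h])
  have hDnN : ∀ (i : Fin m), ∀ a ∈ D i, a ∉ G.neighborSet x := by
    intro i a ha h; exact hDnx i a ha (Set.mem_insert_iff.2 (Or.inr h))
  have hDnZ : ∀ (i : Fin m), ∀ a ∈ D i, a ∉ Z := fun i a ha h => hDnN i a ha (hZ h)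
  have hclosure : ∀ (i : Fin m), ∀ a ∈ D i, ∀ b, G.Adj a b →
      b ∉ insert x (G.neighborSet x) → b ∈ D i := by
    intro i a ha b hab hb
    exact (hcomp i).2.2.2 a ha b hb hab
  -- tree homomorphisms
  let homInl : tree0 →g tree := ⟨Sum.inl, fun {a b} h => (h1 a b).2 h⟩
  let homI : ∀ i, treei i →g tree := fun i => ⟨fun s => Sum.inr ⟨i, s⟩, fun {s t} h => (h2 i s t).2 h⟩
  -- connectivity of the glued tree
  have hT0conn : tree0.Connected := hdec0.isTree.isConnected
  have hproj : ∀ p : T0 ⊕ (Σ i, Ti i), tree.Reachable p (Sum.inl (Sum.elim id (fun q => att q.1) p)) := by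
    rintro (t | ⟨i, s⟩)
    · exact SimpleGraph.Reachable.refl _
    · have h5 : tree.Adj (Sum.inr ⟨i, root i⟩) (Sum.inl (att i)) :=
        ((h4 i (root i) (att i)).2 ⟨rfl, rfl⟩).symm
      exact ((((hdeci i).isTree.isConnected.preconnected s (root i)).map (homI i))).trans h5.reachable
  have hnT0 : Nonempty T0 := hT0conn.nonempty
  have htconn : tree.Connected := by
    have : Nonempty (T0 ⊕ (Σ i, Ti i)) := ⟨Sum.inl hnT0.some⟩
    exact ⟨fun p q => (hproj p).trans
      (((hT0conn.preconnected _ _).map homInl).trans (hproj q).symm)⟩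
  -- acyclicity of the glued tree
  have hacyclic : tree.IsAcyclic := by
    intro w c hc
    by_cases hmixcase : ∃ i : Fin m, (∃ u ∈ c.support, ∃ s : Ti i, u = Sum.inr ⟨i, s⟩) ∧
        (∃ v ∈ c.support, ∀ s : Ti i, v ≠ Sum.inr ⟨i, s⟩)
    · obtain ⟨i, ⟨u, hu, s, rfl⟩, ⟨v, hv, hvs⟩⟩ := hmixcase
      refine cycle_unique_boundary c hc {p | ∃ s : Ti i, p = Sum.inr ⟨i, s⟩}
        (a := Sum.inr ⟨i, root i⟩) (b := Sum.inl (att i)) ?_ hu ⟨s, rfl⟩ hv ?_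
      · rintro p q hadj ⟨s', rfl⟩ hq
        rcases q with t | ⟨j, t⟩
        · have := (h4 i s' t).1 hadj.symm
          exact ⟨by rw [this.2], by rw [this.1]⟩
        · rcases eq_or_ne i j with rfl | hij
          · exact absurd ⟨t, rfl⟩ hq
          · exact absurd hadj (h3 i j hij s' t)
      · rintro ⟨s', rfl⟩
        exact hvs s' rfl
    · push_neg at hmixcase
      rcases w with t0 | ⟨i0, s0⟩
      · refine no_cycle_in_range homInl (fun a b h => Sum.inl.inj h)
          (fun a b h => (h1 a b).1 h) hdec0.isTree.IsAcyclic c hc ?_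
        intro u hu
        rcases u with t | ⟨i, s⟩
        · exact ⟨t, rfl⟩
        · obtain ⟨s', hs'⟩ := hmixcase i ⟨_, hu, s, rfl⟩ (Sum.inl t0) c.start_mem_support
          exact absurd hs' (by simp)
      · refine no_cycle_in_range (homI i0) (fun a b h => by
            have h' : (Sum.inr ⟨i0, a⟩ : T0 ⊕ (Σ i, Ti i)) = Sum.inr ⟨i0, b⟩ := h
            simpa using h')
          (fun a b h => (h2 i0 a b).1 h) (hdeci i0).isTree.IsAcyclic c hc ?_
        intro u hu
        obtain ⟨s', hs'⟩ := hmixcase i0 ⟨_, c.start_mem_support, s0, rfl⟩ u hu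
        exact ⟨s', hs'.symm⟩
  -- membership: every vertex is in some bag
  have hmemF : ∀ a : V, ∃ t, a ∈ F t := by
    intro a
    by_cases hax : a = x
    · exact ⟨Sum.inl hnT0.some, hxZ_all _ _ (Or.inl hax)⟩
    by_cases haZ : a ∈ Z
    · exact ⟨Sum.inl hnT0.some, hxZ_all _ _ (Or.inr haZ)⟩
    by_cases haN : a ∈ G.neighborSet x
    · obtain ⟨t, ht⟩ := hdec0.mem_bag (Sum.inl a) (Or.inl ⟨a, ⟨haN, haZ⟩, rfl⟩)
      exact ⟨Sum.inl t, (hFl t a).2 (Or.inl ht)⟩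
    · obtain ⟨i, hi⟩ := hcover a (by simp [hax, haN])
      obtain ⟨s, hs⟩ := (hdeci i).mem_bag a hi
      exact ⟨Sum.inr ⟨i, s⟩, (hFr i s a).2 (Or.inl hs)⟩
  have hedgeF : ∀ a b : V, G.Adj a b → ∃ t, a ∈ F t ∧ b ∈ F t := by
    have hhalf : ∀ a b : V, G.Adj a b → (a = x ∨ a ∈ Z) → ∃ t, a ∈ F t ∧ b ∈ F t := by
      intro a b _ ha
      obtain ⟨t, ht⟩ := hmemF b
      exact ⟨t, hxZ_all t a ha, ht⟩
    have hDN : ∀ (i : Fin m), ∀ a ∈ D i, ∀ b, G.Adj a b → b ∈ G.neighborSet x → b ∉ Z →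
        ∃ t, a ∈ F t ∧ b ∈ F t := by
      intro i a ha b hab hbN hbZ
      obtain ⟨s, hs⟩ := (hdeci i).mem_bag a ha
      have hbD : b ∉ D i := fun hbD => hDnN i b hbD hbN
      exact ⟨Sum.inr ⟨i, s⟩, (hFr i s a).2 (Or.inl hs),
        (hFr i s b).2 (Or.inr (Or.inl ⟨⟨hbD, a, ha, hab⟩, hbZ⟩))⟩
    intro a b hab
    by_cases hax : a = x ∨ a ∈ Z
    · exact hhalf a b hab hax
    by_cases hbx : b = x ∨ b ∈ Z
    · obtain ⟨t, h1', h2'⟩ := hhalf b a hab.symm hbx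
      exact ⟨t, h2', h1'⟩
    push_neg at hax hbx
    by_cases haN : a ∈ G.neighborSet x
    · by_cases hbN : b ∈ G.neighborSet x
      · have hH : H.Adj (Sum.inl a) (Sum.inl b) := (hH1 a b).2 ⟨⟨haN, hax.2⟩, ⟨hbN, hbx.2⟩, hab⟩
        obtain ⟨t, hta, htb⟩ := hdec0.edge_bag (Sum.inl a) (Or.inl ⟨a, ⟨haN, hax.2⟩, rfl⟩)
          (Sum.inl b) (Or.inl ⟨b, ⟨hbN, hbx.2⟩, rfl⟩) hH
        exact ⟨Sum.inl t, (hFl t a).2 (Or.inl hta), (hFl t b).2 (Or.inl htb)⟩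
      · obtain ⟨i, hi⟩ := hcover b (by simp [hbx.1, hbN])
        obtain ⟨t, h1', h2'⟩ := hDN i b hi a hab.symm haN hax.2
        exact ⟨t, h2', h1'⟩
    · obtain ⟨i, hi⟩ := hcover a (by simp [hax.1, haN])
      by_cases hbN : b ∈ G.neighborSet x
      · exact hDN i a hi b hab hbN hbx.2
      · have hbD : b ∈ D i := hclosure i a hi b hab (by simp [hbx.1, hbN])
        obtain ⟨s, hsa, hsb⟩ := (hdeci i).edge_bag a hi b hbD hab
        exact ⟨Sum.inr ⟨i, s⟩, (hFr i s a).2 (Or.inl hsa), (hFr i s b).2 (Or.inl hsb)⟩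
  have htraceF : ∀ a : V, ∀ t₁, a ∈ F t₁ → ∀ t₂, a ∈ F t₂ →
      ConnectedIn tree {t | a ∈ F t} t₁ t₂ := by
    intro a t₁ h₁ t₂ h₂
    by_cases hax : a = x ∨ a ∈ Z
    · have huniv : {t | a ∈ F t} = Set.univ := Set.eq_univ_of_forall (fun t => hxZ_all t a hax)
      rw [huniv]
      exact connectedIn_univ_of_reachable (htconn.preconnected t₁ t₂)
    push_neg at hax
    by_cases haN : a ∈ G.neighborSet x
    · -- a ∈ N(x) \ Z
      set tr := {t | a ∈ F t} with htr
      have trl : ∀ t : T0, Sum.inl t ∈ tr ↔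
          (Sum.inl a ∈ χ0 t ∨ ∃ i, Sum.inr i ∈ χ0 t ∧ a ∈ nbhd G (D i)) := by
        intro t
        rw [htr, Set.mem_setOf_eq, hFl t a]
        constructor
        · rintro (h | h | h | ⟨i, h1', h2', _⟩)
          · exact Or.inl h
          · exact absurd h hax.2
          · exact absurd h hax.1
          · exact Or.inr ⟨i, h1', h2'⟩
        · rintro (h | ⟨i, h1', h2'⟩)
          · exact Or.inl h
          · exact Or.inr (Or.inr (Or.inr ⟨i, h1', h2', hax.2⟩))
      have trr : ∀ (i : Fin m) (s : Ti i), Sum.inr ⟨i, s⟩ ∈ tr ↔ a ∈ nbhd G (D i) := by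
        intro i s
        rw [htr, Set.mem_setOf_eq, hFr i s a]
        constructor
        · rintro (h | ⟨h, _⟩ | h | h)
          · exact absurd haN (hDnN i a ((hdeci i).bags_subset s h))
          · exact h
          · exact absurd h hax.2
          · exact absurd h hax.1
        · intro h; exact Or.inr (Or.inl ⟨h, hax.2⟩)
      have haW : Sum.inl a ∈ (Sum.inl '' (G.neighborSet x \ Z) ∪ Set.range Sum.inr :
          Set (V ⊕ Fin m)) := Or.inl ⟨a, ⟨haN, hax.2⟩, rfl⟩
      have key2 : ∀ t t' : T0, Sum.inl a ∈ χ0 t → Sum.inl a ∈ χ0 t' →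
          ConnectedIn tree tr (Sum.inl t) (Sum.inl t') := by
        intro t t' ht ht'
        exact ConnectedIn.map homInl
          (fun u hu => (trl u).2 (Or.inl hu))
          (hdec0.trace_connected (Sum.inl a) t ht t' ht')
      have key3 : ∀ (t : T0) (i : Fin m), Sum.inr i ∈ χ0 t → a ∈ nbhd G (D i) →
          ∃ t' : T0, Sum.inl a ∈ χ0 t' ∧ ConnectedIn tree tr (Sum.inl t) (Sum.inl t') := by
        intro t i hit hnb
        have hHadj : H.Adj (Sum.inl a) (Sum.inr i) := (hH2 a i).2 ⟨hnb, hax.2⟩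
        obtain ⟨t', h1', h2'⟩ := hdec0.edge_bag (Sum.inl a) haW (Sum.inr i)
          (Or.inr ⟨i, rfl⟩) hHadj
        refine ⟨t', h1', ConnectedIn.map homInl
          (fun u hu => (trl u).2 (Or.inr ⟨i, hu, hnb⟩)) ?_⟩
        exact hdec0.trace_connected (Sum.inr i) t hit t' h2'
      have key4 : ∀ p ∈ tr, ∃ t' : T0, Sum.inl a ∈ χ0 t' ∧
          ConnectedIn tree tr p (Sum.inl t') := by
        rintro (t | ⟨i, s⟩) hp
        · rcases (trl t).1 hp with h | ⟨i, h1', h2'⟩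
          · exact ⟨t, h, ConnectedIn.refl hp⟩
          · exact key3 t i h1' h2'
        · have hnb := (trr i s).1 hp
          have step1 : ConnectedIn tree tr (Sum.inr ⟨i, s⟩) (Sum.inr ⟨i, root i⟩) := by
            obtain ⟨w⟩ := (hdeci i).isTree.isConnected.preconnected s (root i)
            exact ConnectedIn.map (homI i) (fun u _ => (trr i u).2 hnb)
              ⟨w, fun y _ => trivial⟩
          have hattmem : Sum.inl (att i) ∈ tr := (trl (att i)).2 (Or.inr ⟨i, hatt i, hnb⟩)
          have step2 : ConnectedIn tree tr (Sum.inr ⟨i, root i⟩) (Sum.inl (att i)) :=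
            connectedIn_of_adj (((h4 i (root i) (att i)).2 ⟨rfl, rfl⟩).symm)
              ((trr i (root i)).2 hnb) hattmem
          obtain ⟨t', h1', h2'⟩ := key3 (att i) i (hatt i) hnb
          exact ⟨t', h1', (step1.trans step2).trans h2'⟩
      obtain ⟨t₁', ha1, hc1⟩ := key4 t₁ h₁
      obtain ⟨t₂', ha2, hc2⟩ := key4 t₂ h₂
      exact (hc1.trans (key2 t₁' t₂' ha1 ha2)).trans hc2.symm
    · -- a in some component D i
      obtain ⟨i, hi⟩ := hcover a (by simp [hax.1, haN])
      have char : ∀ t, a ∈ F t → ∃ s : Ti i, t = Sum.inr ⟨i, s⟩ ∧ a ∈ χi i s := by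
        rintro (t | ⟨j, s⟩) ht
        · rcases (hFl t a).1 ht with h | h | h | ⟨j, _, h, _⟩
          · rcases hdec0.bags_subset t h with ⟨b, hb, hba⟩ | ⟨j, hj⟩
            · obtain rfl : b = a := Sum.inl.inj hba
              exact absurd hb.1 haN
            · exact absurd hj (by simp)
          · exact absurd h (hDnZ i a hi)
          · exact absurd h hax.1
          · exact absurd (hND j h) haN
        · rcases (hFr j s a).1 ht with h | ⟨h, _⟩ | h | h
          · rcases eq_or_ne j i with rfl | hji
            · exact ⟨s, rfl, h⟩
            · exact absurd hi (Set.disjoint_left.1 (hdisj j i hji) ((hdeci j).bags_subset s h))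
          · exact absurd (hND j h) haN
          · exact absurd h (hDnZ i a hi)
          · exact absurd h hax.1
      obtain ⟨s₁, rfl, hs₁⟩ := char t₁ h₁
      obtain ⟨s₂, rfl, hs₂⟩ := char t₂ h₂
      exact ConnectedIn.map (homI i)
        (fun u hu => (hFr i u a).2 (Or.inl hu))
        ((hdeci i).trace_connected a s₁ hs₁ s₂ hs₂)
  exact ⟨⟨htconn, hacyclic⟩, fun t => Set.subset_univ _, fun a _ => hmemF a,
    fun a _ b _ hab => hedgeF a b hab, htraceF⟩
end
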